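/- arXiv:1903.01909 — 4 statements merged into one kernel-verified Lean document; each statement's English description precedes it below -/
import Mathlib

section
/- For any string T of length n over an alphabet of size σ ≥ 2, and for any parsing of T into non-empty phrases where any two equal phrases (except possibly the last phrase) are followed by distinct symbols, the number of phrases of length strictly less than L is at most 1 + ∑_{k=1}^{L} σ^{k+1}. -/
/-- Start position (0-based) of the `j`-th phrase of a parsing. -/
def phraseStart {α : Type*} (P : List (List α)) (j : ℕ) : ℕ := ((P.take j).flatten).length

theorem short_phrases_bound (σ L : ℕ) (hσ : 2 ≤ σ)
    (T : List (Fin σ)) (P : List (List (Fin σ)))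
    (hjoin : T = P.flatten) (hne : ∀ Q ∈ P, Q ≠ [])
    (hfollow : ∀ i j : ℕ, i < j → j + 1 < P.length → P.getD i [] = P.getD j [] →
      (P.getD (i + 1) []).head? ≠ (P.getD (j + 1) []).head?) :
    ((List.range P.length).filter (fun i => (P.getD i []).length < L)).length ≤
      1 + ∑ k ∈ Finset.Icc 1 L, σ ^ (k + 1) := by
  classical
  have hcard : ((List.range P.length).filter (fun i => (P.getD i []).length < L)).length
      = ((Finset.range P.length).filter (fun i => (P.getD i []).length < L)).card := by
    simp only [Finset.filter, Finset.range, Finset.card, Multiset.range, Multiset.filter_coe,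
      Multiset.coe_card]
  rw [hcard]
  set F := (Finset.range P.length).filter (fun i => (P.getD i []).length < L) with hF
  set F' := F.filter (fun i => i + 1 < P.length) with hF'
  have hmem : ∀ i, i < P.length → P.getD i [] ∈ P := by
    intro i hi
    rw [List.getD_eq_getElem _ _ hi]
    exact List.getElem_mem _
  have hpos : ∀ i, i < P.length → 1 ≤ (P.getD i []).length := by
    intro i hi
    have h := hne _ (hmem i hi)
    have : (P.getD i []).length ≠ 0 := by simpa [List.length_eq_zero_iff] using h
    omega
  -- Step 1: all but possibly the last phrase index lie in F'
  have hsplit : F.card ≤ F'.card + 1 := by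
    have hsub : F \ F' ⊆ {P.length - 1} := by
      intro i hi
      simp only [Finset.mem_sdiff, hF', Finset.mem_filter] at hi
      obtain ⟨hiF, hnot⟩ := hi
      have hiP : i < P.length := Finset.mem_range.mp (Finset.mem_filter.mp hiF).1
      have hn : ¬ (i + 1 < P.length) := fun h => hnot ⟨hiF, h⟩
      have : i = P.length - 1 := by omega
      simp [this]
    have h1 : F ⊆ F' ∪ (F \ F') := by
      intro i hi
      by_cases h : i ∈ F' <;> simp [Finset.mem_union, Finset.mem_sdiff, h, hi]
    have h2 : (F \ F').card ≤ 1 := by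
      simpa using Finset.card_le_card hsub
    calc F.card ≤ (F' ∪ (F \ F')).card := Finset.card_le_card h1
      _ ≤ F'.card + (F \ F').card := Finset.card_union_le _ _
      _ ≤ F'.card + 1 := by omega
  -- Step 2: inject F' into short strings (phrase ++ following symbol)
  set g : ℕ → List (Fin σ) := fun i => P.getD i [] ++ (P.getD (i+1) []).head?.toList with hg
  set t : Finset (List (Fin σ)) := (Finset.Icc 1 L).biUnion
      (fun k => (Finset.univ : Finset (List.Vector (Fin σ) (k+1))).image List.Vector.toList)
    with ht
  have htcard : t.card = ∑ k ∈ Finset.Icc 1 L, σ ^ (k+1) := by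
    rw [ht, Finset.card_biUnion]
    · refine Finset.sum_congr rfl fun k _ => ?_
      rw [Finset.card_image_of_injective _ List.Vector.toList_injective]
      simp
    · intro x _ y _ hxy
      rw [Function.onFun, Finset.disjoint_left]
      intro l hlx hly
      simp only [Finset.mem_image, Finset.mem_univ, true_and] at hlx hly
      obtain ⟨v, rfl⟩ := hlx
      obtain ⟨w, hw⟩ := hly
      apply hxy
      have h1 : w.toList.length = v.toList.length := by rw [hw]
      simp only [List.Vector.toList_length] at h1
      omega
  -- facts about members of F'
  have hF'mem : ∀ i ∈ F', i + 1 < P.length ∧ 1 ≤ (P.getD i []).length ∧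
      (P.getD i []).length < L ∧ ∃ a, (P.getD (i+1) []).head? = some a := by
    intro i hi
    simp only [hF', hF, Finset.mem_filter, Finset.mem_range, decide_eq_true_eq] at hi
    obtain ⟨⟨hiP, hiL⟩, hi1⟩ := hi
    refine ⟨hi1, hpos i hiP, hiL, ?_⟩
    have h := hne _ (hmem (i+1) hi1)
    obtain ⟨a, l, hl⟩ := List.exists_cons_of_ne_nil h
    exact ⟨a, by rw [hl]; rfl⟩
  have hglen : ∀ i ∈ F', (g i).length = (P.getD i []).length + 1 := by
    intro i hi
    obtain ⟨_, _, _, a, ha⟩ := hF'mem i hi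
    rw [hg]
    simp only [List.length_append, ha, Option.toList_some, List.length_singleton]
  have hmaps : ∀ i ∈ F', g i ∈ t := by
    intro i hi
    obtain ⟨h1, h2, h3, a, ha⟩ := hF'mem i hi
    rw [ht, Finset.mem_biUnion]
    refine ⟨(P.getD i []).length, Finset.mem_Icc.mpr ⟨h2, by omega⟩, ?_⟩
    simp only [Finset.mem_image, Finset.mem_univ, true_and]
    exact ⟨⟨g i, hglen i hi⟩, rfl⟩
  have hinj : Set.InjOn g ↑F' := by
    intro i hi j hj hgij
    by_contra hij
    -- wlog i < j
    rcases Nat.lt_or_ge i j with hlt | hge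
    case _ =>
      obtain ⟨hi1, _, _, a, ha⟩ := hF'mem i hi
      obtain ⟨hj1, _, _, b, hb⟩ := hF'mem j hj
      rw [hg] at hgij
      simp only [ha, hb, Option.toList_some] at hgij
      obtain ⟨heq, htail⟩ := List.append_inj' hgij rfl
      have := hfollow i j hlt hj1 heq
      rw [ha, hb] at this
      exact this (by injection htail with h; rw [h])
    case _ =>
      have hlt : j < i := by omega
      obtain ⟨hi1, _, _, a, ha⟩ := hF'mem i hi
      obtain ⟨hj1, _, _, b, hb⟩ := hF'mem j hj
      rw [hg] at hgij
      simp only [ha, hb, Option.toList_some] at hgij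
      obtain ⟨heq, htail⟩ := List.append_inj' hgij.symm rfl
      have := hfollow j i hlt hi1 heq
      rw [ha, hb] at this
      exact this (by injection htail with h; rw [h])
  have hF'le : F'.card ≤ t.card := Finset.card_le_card_of_injOn g hmaps hinj
  omega
end

section
/- Let m ≥ 8 be a power of 2. If the complete directed graph K*_m on m vertices decomposes into m−1 edge-disjoint Hamiltonian directed cycles, then there exist m−1 permutations π_1,...,π_{m−1} of {1,...,m} such that for every ordered pair (i,j) of distinct elements of {1,...,m}, the event 'j immediately follows i' occurs at most once in total, where 'j immediately follows i' means either π_h(k)=i and π_h(k+1)=j for some h and some k < m, or π_h(m)=i and π_{h+1}(1)=j for some h < m−1. -/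
theorem perms_from_hamiltonian_decomposition (m : ℕ) (hm : 8 ≤ m) (hpow : ∃ t, m = 2 ^ t)
    -- a decomposition of the complete directed graph on `Fin m` into `m - 1`
    -- edge-disjoint Hamiltonian directed cycles, each given by its successor permutation
    (C : Fin (m - 1) → Equiv.Perm (Fin m))
    (hham : ∀ h, (C h).IsCycle ∧ ∀ v, C h v ≠ v)
    (hdisj : ∀ h h', h ≠ h' → ∀ v, C h v ≠ C h' v) :
    ∃ π : Fin (m - 1) → Equiv.Perm (Fin m),
      ∀ i j : Fin m, i ≠ j →
        Set.Subsingleton {p : Fin (m - 1) × Fin m |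
          (∃ hk : (p.2 : ℕ) + 1 < m, π p.1 p.2 = i ∧ π p.1 ⟨(p.2 : ℕ) + 1, hk⟩ = j) ∨
          ((p.2 : ℕ) + 1 = m ∧ ∃ hh : (p.1 : ℕ) + 1 < m - 1,
            π p.1 p.2 = i ∧ π ⟨(p.1 : ℕ) + 1, hh⟩ ⟨0, by omega⟩ = j)} := by
  have hm0 : 0 < m := by omega
  have z : Fin m := ⟨0, hm0⟩
  have horder : ∀ h, orderOf (C h) = m := by
    intro h
    have hs : (C h).support = Finset.univ := by
      ext v
      simp [Equiv.Perm.mem_support, (hham h).2 v]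
    rw [(hham h).1.orderOf, hs, Finset.card_univ, Fintype.card_fin]
  have hinj : ∀ h, Function.Injective (fun k : Fin m => ((C h) ^ (k : ℕ)) ⟨0, hm0⟩) := by
    intro h
    have key : ∀ a b : Fin m, (a : ℕ) ≤ (b : ℕ) →
        ((C h) ^ (a : ℕ)) ⟨0, hm0⟩ = ((C h) ^ (b : ℕ)) ⟨0, hm0⟩ → a = b := by
      intro a b hle hab
      have keq : ((C h) ^ ((b : ℕ) - (a : ℕ))) (((C h) ^ (a : ℕ)) ⟨0, hm0⟩)
          = ((C h) ^ (a : ℕ)) ⟨0, hm0⟩ := by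
        conv_rhs => rw [hab]
        rw [← Equiv.Perm.mul_apply, ← pow_add]
        congr 2
        omega
      have hone : (C h) ^ ((b : ℕ) - (a : ℕ)) = 1 :=
        (hham h).1.pow_eq_one_iff.2 ⟨_, (hham h).2 _, keq⟩
      have hdvd : orderOf (C h) ∣ (b : ℕ) - (a : ℕ) := orderOf_dvd_of_pow_eq_one hone
      rw [horder h] at hdvd
      have hba : (b : ℕ) - (a : ℕ) = 0 := by
        rcases Nat.eq_zero_or_pos ((b : ℕ) - (a : ℕ)) with h0 | hpos
        · exact h0
        · exact absurd (Nat.le_of_dvd hpos hdvd) (by omega)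
      exact Fin.ext (by omega)
    intro a b hab
    simp only at hab
    rcases le_total (a : ℕ) (b : ℕ) with hle | hle
    · exact key a b hle hab
    · exact (key b a hle hab.symm).symm
  let π : Fin (m - 1) → Equiv.Perm (Fin m) := fun h =>
    Equiv.ofBijective _ ((Finite.injective_iff_bijective).1 (hinj h))
  have hπ : ∀ h (k : Fin m), π h k = ((C h) ^ (k : ℕ)) ⟨0, hm0⟩ := fun h k => rfl
  refine ⟨π, fun i j _ p hp q hq => ?_⟩
  -- In both clauses: π p.1 p.2 = i and C p.1 i = j
  have main : ∀ r : Fin (m - 1) × Fin m, r ∈ {p : Fin (m - 1) × Fin m |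
          (∃ hk : (p.2 : ℕ) + 1 < m, π p.1 p.2 = i ∧ π p.1 ⟨(p.2 : ℕ) + 1, hk⟩ = j) ∨
          ((p.2 : ℕ) + 1 = m ∧ ∃ hh : (p.1 : ℕ) + 1 < m - 1,
            π p.1 p.2 = i ∧ π ⟨(p.1 : ℕ) + 1, hh⟩ ⟨0, by omega⟩ = j)} →
      π r.1 r.2 = i ∧ C r.1 i = j := by
    rintro r (⟨hk, hi, hj⟩ | ⟨hk, hh, hi, hj⟩)
    · refine ⟨hi, ?_⟩
      rw [← hi, ← hj, hπ, hπ]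
      simp only [pow_succ', Equiv.Perm.mul_apply]
    · refine ⟨hi, ?_⟩
      rw [← hi, ← hj, hπ, hπ]
      simp only [pow_zero, Equiv.Perm.one_apply]
      have hpow1 : (C r.1) ^ ((r.2 : ℕ) + 1) = 1 := by
        have h1 := pow_orderOf_eq_one (C r.1)
        rw [horder r.1] at h1
        rw [hk]; exact h1
      have : ((C r.1) ^ ((r.2 : ℕ) + 1)) ⟨0, hm0⟩ = ⟨0, hm0⟩ := by
        rw [hpow1, Equiv.Perm.one_apply]
      rw [pow_succ', Equiv.Perm.mul_apply] at this
      rw [this]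
  obtain ⟨hpi, hpj⟩ := main p hp
  obtain ⟨hqi, hqj⟩ := main q hq
  have h1 : p.1 = q.1 := by
    by_contra hne
    exact hdisj p.1 q.1 hne i (hpj.trans hqj.symm)
  have h2 : p.2 = q.2 := by
    apply (π p.1).injective
    rw [hpi, h1, hqi]
  exact Prod.ext h1 h2
end

section
/- Let b ≥ 2 be even, let S be the concatenation of all 2^b binary strings of length b in lexicographic (increasing numeric) order, and let S_i denote S cyclically shifted left by i positions. Partition S_i into 2^b consecutive blocks R^{(i)}_1,...,R^{(i)}_{2^b} of length b each. Then for any 1 ≤ i < j ≤ b/2 and any indices k, h with 1 ≤ k, h < 2^b, if R^{(i)}_k = R^{(j)}_h then R^{(i)}_{k+1} ≠ R^{(j)}_{h+1}. -/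
/-- Bit at position `t` (0-based) of `S`, the concatenation of all `2^b` binary strings
of length `b` in increasing numeric order, most significant bit first. -/
def sBit (b t : ℕ) : Bool := Nat.testBit (t / b) (b - 1 - t % b)

/-- The `k`-th (1-based) length-`b` block of `S_i`, the cyclic left shift of `S` by `i`. -/
def shiftBlock (b i k : ℕ) : List Bool :=
  (List.range b).map (fun r => sBit b (((k - 1) * b + r + i) % (b * 2 ^ b)))


private lemma tdiv' (x m n : ℕ) : Nat.testBit (x / 2^m) n = Nat.testBit x (m + n) := by
  rw [Nat.testBit_eq_decide_div_mod_eq, Nat.testBit_eq_decide_div_mod_eq, Nat.div_div_eq_div_mul, ← pow_add]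

private lemma succ_div_mod' (n m : ℕ) (h : n % m + 1 < m) :
    (n+1)/m = n/m ∧ (n+1)%m = n%m + 1 := by
  have hm : 0 < m := by omega
  have hd := Nat.div_add_mod n m
  have he : n + 1 = (n % m + 1) + m * (n / m) := by omega
  constructor
  · rw [he, Nat.add_mul_div_left _ _ hm, Nat.div_eq_of_lt h, Nat.zero_add]
  · rw [he, Nat.add_mul_mod_self_left, Nat.mod_eq_of_lt h]

private lemma pred_div_mod' (n m : ℕ) (hm : 0 < m) (h : 1 ≤ n % m) :
    (n-1)/m = n/m ∧ (n-1)%m = n%m - 1 := by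
  have hd := Nat.div_add_mod n m
  have hlt : n % m < m := Nat.mod_lt _ hm
  have he : n - 1 = (n % m - 1) + m * (n / m) := by omega
  constructor
  · rw [he, Nat.add_mul_div_left _ _ hm, Nat.div_eq_of_lt (by omega), Nat.zero_add]
  · rw [he, Nat.add_mul_mod_self_left, Nat.mod_eq_of_lt (by omega)]

private lemma pred_pow_div_mod' (a c : ℕ) :
    (2^(a+c) - 1) / 2^a = 2^c - 1 ∧ (2^(a+c) - 1) % 2^a = 2^a - 1 := by
  have hP : 1 ≤ 2^a := Nat.one_le_two_pow
  have hQ : 1 ≤ 2^c := Nat.one_le_two_pow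
  have h3 : 2^a ≤ 2^a * 2^c := Nat.le_mul_of_pos_right _ (by positivity)
  have hkey : 2^(a+c) - 1 = 2^a * (2^c - 1) + (2^a - 1) := by
    have h1 : 2^a * (2^c - 1) = 2^a * 2^c - 2^a := by
      rw [Nat.mul_sub, Nat.mul_one]
    have h2 : (2:ℕ)^(a+c) = 2^a * 2^c := pow_add 2 a c
    omega
  constructor
  · rw [hkey, Nat.mul_add_div (Nat.two_pow_pos a), Nat.div_eq_of_lt (by omega), Nat.add_zero]
  · rw [hkey, Nat.mul_add_mod, Nat.mod_eq_of_lt (by omega)]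

private lemma split_eq' {p A B x y : ℕ} (hx : x < p) (hy : y < p)
    (he : A * p + x = B * p + y) : A = B ∧ x = y := by
  have hp : 0 < p := by omega
  have hA : A = B := by
    have h1 : (A * p + x) / p = A := by
      rw [Nat.mul_comm, Nat.mul_add_div hp, Nat.div_eq_of_lt hx, Nat.add_zero]
    have h2 : (B * p + y) / p = B := by
      rw [Nat.mul_comm, Nat.mul_add_div hp, Nat.div_eq_of_lt hy, Nat.add_zero]
    rw [← h1, ← h2, he]
  subst hA
  exact ⟨rfl, by omega⟩

private lemma arith_contra (b i j k h : ℕ) (hi1 : 1 ≤ i) (hij : i < j) (hj2 : 2*j ≤ b)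
    (hk1 : 1 ≤ k) (hk : k < 2^b) (hh1 : 1 ≤ h) (hh : h < 2^b)
    (H0 : (h-1) % 2^(b-j) = (k-1)/2^(j-i) % 2^(b-j))
    (H1 : h = (k-1) % 2^(j-i) * 2^(b-(j-i)) + k / 2^(j-i))
    (H2 : ((h+1)%2^b) / 2^(b-j) = k % 2^(j-i) * 2^i + ((k+1)%2^b) / 2^(b-i)) : False := by
  have h2d : 2 ≤ 2^(j-i) := by
    have : (2:ℕ)^1 ≤ 2^(j-i) := Nat.pow_le_pow_right (by norm_num) (by omega)
    simpa using this
  have h2i : 2 ≤ 2^i := by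
    have : (2:ℕ)^1 ≤ 2^i := Nat.pow_le_pow_right (by norm_num) (by omega)
    simpa using this
  have h2e2 : 2 ≤ 2^(b-j) := by
    have : (2:ℕ)^1 ≤ 2^(b-j) := Nat.pow_le_pow_right (by norm_num) (by omega)
    simpa using this
  have hp1 : (1:ℕ) ≤ 2^b := Nat.one_le_two_pow
  have e2 : (k-1) % 2^(j-i) * 2^(b-(j-i)) + k / 2^(j-i)
      = 2^(b-j) * ((k-1) % 2^(j-i) * 2^i) + k / 2^(j-i) := by
    have e1 : (2:ℕ)^(b-(j-i)) = 2^i * 2^(b-j) := by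
      rw [← pow_add]; congr 1; omega
    rw [e1]; ring
  have hdiv : h / 2^(b-j) = (k-1) % 2^(j-i) * 2^i + k / 2^(b-i) := by
    rw [H1, e2, Nat.mul_add_div (Nat.two_pow_pos (b-j)), Nat.div_div_eq_div_mul, ← pow_add,
      show (j-i)+(b-j) = b-i by omega]
  have hmod : h % 2^(b-j) = (k / 2^(j-i)) % 2^(b-j) := by
    rw [H1, e2, Nat.mul_add_mod]
  have hxlt : k / 2^(b-i) < 2^i := by
    apply Nat.div_lt_of_lt_mul
    rw [← pow_add, show (b-i)+i = b by omega]; exact hk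
  by_cases hc : h % 2^(b-j) = 2^(b-j) - 1
  · -- carry case
    have hkmod : (k / 2^(j-i)) % 2^(b-j) = 2^(b-j) - 1 := by rw [← hmod]; exact hc
    by_cases hkd : k % 2^(j-i) = 2^(j-i) - 1
    · -- subcase 2a : contradiction with H0
      have hk2 : 1 ≤ k % 2^(j-i) := by omega
      have hpd := pred_div_mod' k (2^(j-i)) (Nat.two_pow_pos _) hk2
      have hhm1 : 1 ≤ h % 2^(b-j) := by omega
      have hph := pred_div_mod' h (2^(b-j)) (Nat.two_pow_pos _) hhm1
      rw [hph.2, hc, hpd.1, hkmod] at H0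
      omega
    · -- subcase 2b
      have hkmd : k % 2^(j-i) < 2^(j-i) - 1 := by
        have := Nat.mod_lt k (Nat.two_pow_pos (j-i))
        omega
      have hsplit : k % 2^(b-i) = k % 2^(j-i) + 2^(j-i) * ((k / 2^(j-i)) % 2^(b-j)) := by
        have hpw : (2:ℕ)^(b-i) = 2^(j-i) * 2^(b-j) := by
          rw [← pow_add]; congr 1; omega
        rw [hpw, Nat.mod_mul]
      rw [hkmod] at hsplit
      have hmul : 2^(j-i) * (2^(b-j) - 1) = 2^(b-i) - 2^(j-i) := by
        rw [Nat.mul_sub, Nat.mul_one, ← pow_add, show (j-i)+(b-j) = b-i by omega]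
      have hAC : (2:ℕ)^(j-i) ≤ 2^(b-i) := Nat.pow_le_pow_right (by norm_num) (by omega)
      have hkC : k % 2^(b-i) < 2^(b-i) := Nat.mod_lt _ (Nat.two_pow_pos _)
      have hkbi : k % 2^(b-i) + 1 < 2^(b-i) := by omega
      have hkne : k ≠ 2^b - 1 := by
        intro he
        have hpp := (pred_pow_div_mod' (b-i) i).2
        rw [show (b-i)+i = b by omega] at hpp
        rw [he, hpp] at hkbi
        omega
      have hk2b : k + 1 < 2^b := by omega
      have hks := succ_div_mod' k (2^(b-i)) hkbi
      have hLHS : ((h+1)%2^b)/2^(b-j) = (h / 2^(b-j) + 1) % 2^j := by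
        by_cases hht : h = 2^b - 1
        · have h1 : h + 1 = 2^b := by omega
          rw [h1, Nat.mod_self, Nat.zero_div]
          have hpp := (pred_pow_div_mod' (b-j) j).1
          rw [show (b-j)+j = b by omega] at hpp
          rw [hht, hpp, show 2^j - 1 + 1 = 2^j by
            have : (1:ℕ) ≤ 2^j := Nat.one_le_two_pow
            omega, Nat.mod_self]
        · have h1 : h + 1 < 2^b := by omega
          rw [Nat.mod_eq_of_lt h1]
          have hda := Nat.div_add_mod h (2^(b-j))
          have hmm : h + 1 = 2^(b-j) * (h / 2^(b-j) + 1) := by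
            rw [Nat.mul_add, Nat.mul_one]; omega
          have h3 : (h+1)/2^(b-j) = h/2^(b-j)+1 := by
            rw [hmm]; exact Nat.mul_div_cancel_left _ (Nat.two_pow_pos _)
          rw [h3]
          symm; apply Nat.mod_eq_of_lt
          have h4 : (2:ℕ)^b = 2^(b-j) * 2^j := by
            rw [← pow_add]; congr 1; omega
          have h5 : 2^(b-j) * (h/2^(b-j)+1) < 2^(b-j) * 2^j := by omega
          exact lt_of_mul_lt_mul_left h5 (Nat.zero_le _)
      rw [hLHS, hdiv, Nat.mod_eq_of_lt hk2b, hks.1] at H2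
      have hdvd : (2:ℕ)^i ∣ 2^j := pow_dvd_pow 2 (by omega)
      have hL : (((k-1)%2^(j-i) * 2^i + k/2^(b-i) + 1) % 2^j) % 2^i
          = (k/2^(b-i) + 1) % 2^i := by
        rw [Nat.mod_mod_of_dvd _ hdvd, Nat.add_assoc, Nat.mul_comm, Nat.mul_add_mod]
      have hR : (k%2^(j-i)*2^i + k/2^(b-i)) % 2^i = k / 2^(b-i) := by
        rw [Nat.mul_comm, Nat.mul_add_mod, Nat.mod_eq_of_lt hxlt]
      have hfin : (k/2^(b-i) + 1) % 2^i = k/2^(b-i) := by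
        rw [← hL, H2, hR]
      rcases lt_or_ge (k/2^(b-i) + 1) (2^i) with hlt | hge
      · rw [Nat.mod_eq_of_lt hlt] at hfin; omega
      · have hEq : k/2^(b-i) + 1 = 2^i := by omega
        rw [hEq, Nat.mod_self] at hfin
        omega
  · -- no-carry case
    have hhm : h % 2^(b-j) < 2^(b-j) := Nat.mod_lt _ (Nat.two_pow_pos _)
    have hne : h ≠ 2^b - 1 := by
      intro he
      apply hc
      have hpp := (pred_pow_div_mod' (b-j) j).2
      rw [show (b-j)+j = b by omega] at hpp
      rw [he]; exact hpp
    have hh2 : h + 1 < 2^b := by omega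
    have hsd := succ_div_mod' h (2^(b-j)) (by omega)
    rw [Nat.mod_eq_of_lt hh2, hsd.1, hdiv] at H2
    have hy : ((k+1)%2^b)/2^(b-i) < 2^i := by
      apply Nat.div_lt_of_lt_mul
      rw [← pow_add, show (b-i)+i = b by omega]
      exact Nat.mod_lt _ (by positivity)
    have hAB := split_eq' hxlt hy H2
    have hm1 : ((k-1)%2^(j-i)) % 2 = (k-1) % 2 :=
      Nat.mod_mod_of_dvd _ (dvd_pow_self 2 (by omega : j - i ≠ 0))
    have hm2 : (k%2^(j-i)) % 2 = k % 2 :=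
      Nat.mod_mod_of_dvd _ (dvd_pow_self 2 (by omega : j - i ≠ 0))
    have := hAB.1
    omega


private lemma sBit_spec (b m s : ℕ) (hb : 0 < b) (hs : s < b) :
    sBit b ((m * b + s) % (b * 2^b)) = Nat.testBit (m % 2^b) (b - 1 - s) := by
  have hP : 0 < 2^b := Nat.two_pow_pos b
  have hmod : (m * b + s) % (b * 2^b) = (m % 2^b) * b + s := by
    have hdm := Nat.div_add_mod m (2^b)
    have h1 : m * b + s = (b * 2^b) * (m / 2^b) + ((m % 2^b) * b + s) := by
      calc m * b + s = (2^b * (m / 2^b) + m % 2^b) * b + s := by rw [hdm]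
        _ = (b * 2^b) * (m / 2^b) + ((m % 2^b) * b + s) := by ring
    rw [h1, Nat.mul_add_mod]
    apply Nat.mod_eq_of_lt
    have h2 : m % 2^b < 2^b := Nat.mod_lt _ hP
    have h3 : (m % 2^b + 1) * b ≤ 2^b * b := Nat.mul_le_mul_right _ (by omega)
    have h4 : (m % 2^b + 1) * b = (m % 2^b) * b + b := by ring
    have h5 : 2^b * b = b * 2^b := Nat.mul_comm _ _
    omega
  rw [hmod]
  unfold sBit
  have hd : ((m % 2^b) * b + s) / b = m % 2^b := by
    rw [Nat.mul_comm, Nat.mul_add_div hb, Nat.div_eq_of_lt hs, Nat.add_zero]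
  have hm2 : ((m % 2^b) * b + s) % b = s := by
    rw [Nat.mul_comm, Nat.mul_add_mod, Nat.mod_eq_of_lt hs]
  rw [hd, hm2]

private lemma block_low (b i m r : ℕ) (hb : 0 < b) (hm : m < 2^b) (hri : r + i < b) :
    sBit b ((m * b + r + i) % (b * 2^b)) = Nat.testBit m (b - 1 - (r + i)) := by
  rw [Nat.add_assoc, sBit_spec b m (r+i) hb hri, Nat.mod_eq_of_lt hm]

private lemma block_high (b i m r : ℕ) (hb : 0 < b) (hri : b ≤ r + i) (hri2 : r + i < 2*b) :
    sBit b ((m * b + r + i) % (b * 2^b)) = Nat.testBit ((m+1) % 2^b) (2*b - 1 - (r + i)) := by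
  have h1 : m * b + r + i = (m+1) * b + (r + i - b) := by
    have : (m+1) * b = m * b + b := by ring
    omega
  rw [h1, sBit_spec b (m+1) (r+i-b) hb (by omega)]
  congr 1
  omega

private lemma tdiv (x m n : ℕ) : Nat.testBit (x / 2^m) n = Nat.testBit x (m + n) := by
  rw [Nat.testBit_eq_decide_div_mod_eq, Nat.testBit_eq_decide_div_mod_eq, Nat.div_div_eq_div_mul, ← pow_add]

private lemma tlow {m n : ℕ} (y x : ℕ) (hn : n < m) :
    Nat.testBit (y * 2^m + x) n = Nat.testBit x n := by
  rw [Nat.testBit_eq_decide_div_mod_eq, Nat.testBit_eq_decide_div_mod_eq]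
  have h1 : (2:ℕ)^m = 2^(m-n) * 2^n := by rw [← pow_add]; congr 1; omega
  have h2 : (y * 2^m + x) / 2^n = x / 2^n + 2 * (y * 2^(m-n-1)) := by
    rw [h1, ← Nat.mul_assoc, Nat.add_comm, Nat.add_mul_div_right _ _ (Nat.two_pow_pos n)]
    have h3 : y * 2^(m-n) = 2 * (y * 2^(m-n-1)) := by
      obtain ⟨t, ht⟩ : ∃ t, m - n = t + 1 := ⟨m-n-1, by omega⟩
      rw [ht, Nat.add_sub_cancel, pow_succ]; ring
    omega
  rw [h2, Nat.add_mul_mod_self_left]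

private lemma thigh {m n : ℕ} (y x : ℕ) (hx : x < 2^m) (hn : m ≤ n) :
    Nat.testBit (y * 2^m + x) n = Nat.testBit y (n - m) := by
  have h0 : (y * 2^m + x) / 2^m = y := by
    rw [Nat.add_comm, Nat.add_mul_div_right _ _ (Nat.two_pow_pos m),
      Nat.div_eq_of_lt hx, Nat.zero_add]
  conv_lhs => rw [show n = m + (n - m) by omega]
  rw [← tdiv, h0]

theorem shifted_blocks_no_repeated_pair (b : ℕ) (hb : 2 ≤ b) (heven : Even b)
    (i j k h : ℕ) (hi1 : 1 ≤ i) (hij : i < j) (hjb : j ≤ b / 2)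
    (hk1 : 1 ≤ k) (hk : k < 2 ^ b) (hh1 : 1 ≤ h) (hh : h < 2 ^ b)
    (heq : shiftBlock b i k = shiftBlock b j h) :
    shiftBlock b i (k + 1) ≠ shiftBlock b j (h + 1) := by
  intro heq2
  have hb0 : 0 < b := by omega
  have hj2 : 2*j ≤ b := by omega
  have hib : i < b := by omega
  have hjbb : j < b := by omega
  have P1 : ∀ r, r < b → sBit b (((k-1)*b + r + i) % (b*2^b))
      = sBit b (((h-1)*b + r + j) % (b*2^b)) := by
    intro r hr
    have h5 := congrArg (fun l => l[r]?) heq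
    simpa [shiftBlock, List.getElem?_map, List.getElem?_range hr] using h5
  have P2 : ∀ r, r < b → sBit b ((k*b + r + i) % (b*2^b))
      = sBit b ((h*b + r + j) % (b*2^b)) := by
    intro r hr
    have h5 := congrArg (fun l => l[r]?) heq2
    simpa [shiftBlock, List.getElem?_map, List.getElem?_range hr] using h5
  -- bit facts
  have F0 : ∀ n, n < b - j → Nat.testBit (h-1) n = Nat.testBit (k-1) ((j-i) + n) := by
    intro n hn
    have hp := P1 (b-1-j-n) (by omega)
    rw [block_low b i (k-1) _ hb0 (by omega) (by omega),
        block_low b j (h-1) _ hb0 (by omega) (by omega),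
        show b - 1 - (b-1-j-n + i) = (j-i) + n by omega,
        show b - 1 - (b-1-j-n + j) = n by omega] at hp
    exact hp.symm
  have F1 : ∀ n, n < b - j → Nat.testBit h n = Nat.testBit k ((j-i) + n) := by
    intro n hn
    have hp := P2 (b-1-j-n) (by omega)
    rw [block_low b i k _ hb0 hk (by omega),
        block_low b j h _ hb0 hh (by omega),
        show b - 1 - (b-1-j-n + i) = (j-i) + n by omega,
        show b - 1 - (b-1-j-n + j) = n by omega] at hp
    exact hp.symm
  have F2 : ∀ n, b - j ≤ n → n < b - (j-i) → Nat.testBit h n = Nat.testBit k ((j-i)+n) := by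
    intro n h1 h2
    have hp := P1 (2*b-1-j-n) (by omega)
    rw [block_high b i (k-1) _ hb0 (by omega) (by omega),
        block_high b j (h-1) _ hb0 (by omega) (by omega),
        show k - 1 + 1 = k by omega, show h - 1 + 1 = h by omega,
        Nat.mod_eq_of_lt hk, Nat.mod_eq_of_lt hh,
        show 2*b - 1 - (2*b-1-j-n + i) = (j-i) + n by omega,
        show 2*b - 1 - (2*b-1-j-n + j) = n by omega] at hp
    exact hp.symm
  have F3 : ∀ n, b - (j-i) ≤ n → n < b →
      Nat.testBit h n = Nat.testBit (k-1) (n - (b-(j-i))) := by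
    intro n h1 h2
    have hp := P1 (2*b-1-j-n) (by omega)
    rw [block_low b i (k-1) _ hb0 (by omega) (by omega),
        block_high b j (h-1) _ hb0 (by omega) (by omega),
        show h - 1 + 1 = h by omega, Nat.mod_eq_of_lt hh,
        show b - 1 - (2*b-1-j-n + i) = n - (b-(j-i)) by omega,
        show 2*b - 1 - (2*b-1-j-n + j) = n by omega] at hp
    exact hp.symm
  have F4 : ∀ n, i ≤ n → n < j →
      Nat.testBit ((h+1)%2^b) ((b-j)+n) = Nat.testBit k (n-i) := by
    intro n h1 h2
    have hp := P2 (b-1-n) (by omega)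
    rw [block_low b i k _ hb0 hk (by omega),
        block_high b j h _ hb0 (by omega) (by omega),
        show b - 1 - (b-1-n + i) = n - i by omega,
        show 2*b - 1 - (b-1-n + j) = (b-j) + n by omega] at hp
    exact hp.symm
  have F5 : ∀ n, n < i →
      Nat.testBit ((h+1)%2^b) ((b-j)+n) = Nat.testBit ((k+1)%2^b) ((b-i)+n) := by
    intro n hn
    have hp := P2 (b-1-n) (by omega)
    rw [block_high b i k _ hb0 (by omega) (by omega),
        block_high b j h _ hb0 (by omega) (by omega),
        show 2*b - 1 - (b-1-n + i) = (b-i) + n by omega,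
        show 2*b - 1 - (b-1-n + j) = (b-j) + n by omega] at hp
    exact hp.symm
  have hpow : ∀ m n : ℕ, m ≤ n → (2:ℕ)^m ≤ 2^n :=
    fun m n hmn => Nat.pow_le_pow_right (by norm_num) hmn
  have H0 : (h-1) % 2^(b-j) = (k-1)/2^(j-i) % 2^(b-j) := by
    apply Nat.eq_of_testBit_eq; intro n
    rw [Nat.testBit_mod_two_pow, Nat.testBit_mod_two_pow, tdiv]
    by_cases hn : n < b - j
    · simp only [hn, decide_true, Bool.true_and]
      exact F0 n hn
    · simp [hn]
  have H1 : h = (k-1) % 2^(j-i) * 2^(b-(j-i)) + k / 2^(j-i) := by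
    have hq : k / 2^(j-i) < 2^(b-(j-i)) := by
      apply Nat.div_lt_of_lt_mul
      rw [← pow_add, show (j-i) + (b-(j-i)) = b by omega]; exact hk
    apply Nat.eq_of_testBit_eq; intro n
    rcases lt_or_ge n b with hnb | hnb
    · rcases lt_or_ge n (b-(j-i)) with hlow | hhigh
      · rw [tlow _ _ hlow, tdiv]
        rcases lt_or_ge n (b-j) with h1 | h1
        · exact F1 n h1
        · exact F2 n h1 hlow
      · rw [thigh _ _ hq hhigh, Nat.testBit_mod_two_pow]
        simp only [show n - (b-(j-i)) < j - i by omega, decide_true, Bool.true_and]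
        exact F3 n hhigh hnb
    · have hz1 : Nat.testBit h n = false :=
        Nat.testBit_lt_two_pow (lt_of_lt_of_le hh (hpow b n hnb))
      have hsum : (k-1) % 2^(j-i) * 2^(b-(j-i)) + k / 2^(j-i) < 2^b := by
        have hm1 : (k-1) % 2^(j-i) < 2^(j-i) := Nat.mod_lt _ (Nat.two_pow_pos _)
        have h2 : ((k-1) % 2^(j-i) + 1) * 2^(b-(j-i)) ≤ 2^(j-i) * 2^(b-(j-i)) :=
          Nat.mul_le_mul_right _ (by omega)
        have h3 : ((k-1) % 2^(j-i) + 1) * 2^(b-(j-i))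
            = (k-1) % 2^(j-i) * 2^(b-(j-i)) + 2^(b-(j-i)) := by ring
        have h4 : (2:ℕ)^(j-i) * 2^(b-(j-i)) = 2^b := by
          rw [← pow_add]; congr 1; omega
        omega
      rw [hz1, Nat.testBit_lt_two_pow (lt_of_lt_of_le hsum (hpow b n hnb))]
  have H2 : ((h+1)%2^b) / 2^(b-j) = k % 2^(j-i) * 2^i + ((k+1)%2^b) / 2^(b-i) := by
    have hY : ((k+1)%2^b) / 2^(b-i) < 2^i := by
      apply Nat.div_lt_of_lt_mul
      rw [← pow_add, show (b-i)+i = b by omega]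
      exact Nat.mod_lt _ (by positivity)
    apply Nat.eq_of_testBit_eq; intro n
    rw [tdiv]
    rcases lt_or_ge n i with h1 | h1
    · rw [tlow _ _ h1, tdiv]
      exact F5 n h1
    · rcases lt_or_ge n j with h2 | h2
      · rw [thigh _ _ hY h1, Nat.testBit_mod_two_pow]
        have hlt : n - i < j - i := by omega
        have hlt2 : b - j + n < b := by omega
        have hb2 := F4 n h1 h2
        simp only [Nat.testBit_mod_two_pow, hlt2, decide_true, Bool.true_and] at hb2
        simp [hlt, hlt2, hb2]
      · have hz1 : Nat.testBit ((h+1)%2^b) ((b-j)+n) = false :=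
          Nat.testBit_lt_two_pow (lt_of_lt_of_le (Nat.mod_lt _ (by positivity))
            (hpow b ((b-j)+n) (by omega)))
        have hsum : k % 2^(j-i) * 2^i + ((k+1)%2^b)/2^(b-i) < 2^j := by
          have hm1 : k % 2^(j-i) < 2^(j-i) := Nat.mod_lt _ (Nat.two_pow_pos _)
          have hmul : (k % 2^(j-i) + 1) * 2^i ≤ 2^(j-i) * 2^i :=
            Nat.mul_le_mul_right _ (by omega)
          have hexp : (2:ℕ)^(j-i) * 2^i = 2^j := by
            rw [← pow_add]; congr 1; omega
          have hd2 : (k % 2^(j-i) + 1) * 2^i = k % 2^(j-i) * 2^i + 2^i := by ring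
          omega
        rw [hz1, Nat.testBit_lt_two_pow (lt_of_lt_of_le hsum (hpow j n h2))]
  exact arith_contra b i j k h hi1 hij hj2 hk1 hk hh1 hh H0 H1 H2
end

section
/- The greedy LZ77 parsing of any string T has the minimum number of phrases among all LZ-like parsings of T. -/
/-- An LZ-like parsing of `T`: a factorization into non-empty phrases where each
phrase is a single symbol or has an occurrence in `T` starting strictly before it. -/
def IsLZLike {α : Type*} (T : List α) (P : List (List α)) : Prop :=
  T = P.flatten ∧ (∀ Q ∈ P, Q ≠ []) ∧
  ∀ j, j < P.length →
    (P.getD j []).length = 1 ∨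
    ∃ p, p < phraseStart P j ∧ (T.drop p).take (P.getD j []).length = P.getD j []

/-- The greedy LZ77 parsing: an LZ-like parsing in which no phrase can be extended,
i.e., no strictly longer prefix of the remaining suffix has an earlier occurrence. -/
def IsGreedyLZ {α : Type*} (T : List α) (P : List (List α)) : Prop :=
  IsLZLike T P ∧
  ∀ j, j < P.length → ∀ L, (P.getD j []).length < L →
    phraseStart P j + L ≤ T.length →
    ¬ ∃ p, p < phraseStart P j ∧
      (T.drop p).take L = (T.drop (phraseStart P j)).take L

/-- The Relative Lempel--Ziv parsing of `T` with reference `R`: each phrase is the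
longest prefix of the remaining suffix occurring as a substring of `R`, or a literal. -/
def IsRLZ {α : Type*} (R T : List α) (P : List (List α)) : Prop :=
  T = P.flatten ∧ (∀ Q ∈ P, Q ≠ []) ∧
  (∀ j, j < P.length → (P.getD j []).length = 1 ∨ (P.getD j []) <:+: R) ∧
  ∀ j, j < P.length → ∀ L, (P.getD j []).length < L →
    phraseStart P j + L ≤ T.length →
    ¬ ((T.drop (phraseStart P j)).take L <:+: R)

lemma phraseStart_le {α : Type*} (P : List (List α)) (j : ℕ) :
    phraseStart P j ≤ P.flatten.length := by
  conv_rhs => rw [← List.take_append_drop j P]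
  rw [List.flatten_append, List.length_append, phraseStart]; omega

lemma phraseStart_succ {α : Type*} (P : List (List α)) (j : ℕ) (hj : j < P.length) :
    phraseStart P (j+1) = phraseStart P j + (P.getD j []).length := by
  unfold phraseStart
  rw [List.take_succ, List.flatten_append, List.length_append,
    List.getD_eq_getElem?_getD, List.getElem?_eq_getElem hj]
  simp

lemma phraseStart_of_le {α : Type*} (P : List (List α)) (j : ℕ) (hj : P.length ≤ j) :
    phraseStart P j = P.flatten.length := by
  rw [phraseStart, List.take_of_length_le hj]

lemma drop_phraseStart {α : Type*} (T : List α) (P : List (List α)) (h : T = P.flatten)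
    (j : ℕ) (hj : j < P.length) :
    T.drop (phraseStart P j) = P.getD j [] ++ (P.drop (j+1)).flatten := by
  have h1 : T = (P.take j).flatten ++ (P.drop j).flatten := by
    rw [← List.flatten_append, List.take_append_drop, h]
  rw [phraseStart, h1, List.drop_left,
    List.drop_eq_getElem_cons hj, List.flatten_cons,
    List.getD_eq_getElem?_getD, List.getElem?_eq_getElem hj]
  simp

lemma take_drop_phraseStart {α : Type*} (T : List α) (P : List (List α)) (h : T = P.flatten)
    (j : ℕ) (hj : j < P.length) :
    (T.drop (phraseStart P j)).take (P.getD j []).length = P.getD j [] := by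
  rw [drop_phraseStart T P h j hj, List.take_left]

lemma getD_length_pos {α : Type*} {P : List (List α)} (hne : ∀ Q ∈ P, Q ≠ [])
    {j : ℕ} (hj : j < P.length) : 0 < (P.getD j []).length := by
  rw [List.getD_eq_getElem?_getD, List.getElem?_eq_getElem hj]
  exact List.length_pos_iff.mpr (hne _ (List.getElem_mem hj))

lemma shift_match {α : Type*} (T : List α) (a b n d : ℕ)
    (h : (T.drop a).take n = (T.drop b).take n) :
    (T.drop (a+d)).take (n-d) = (T.drop (b+d)).take (n-d) := by
  have := congrArg (List.drop d) h
  rwa [List.drop_take, List.drop_take, List.drop_drop, List.drop_drop] at this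

lemma exchange {α : Type*} (T : List α) (P Q : List (List α))
    (hP : IsGreedyLZ T P) (hQ : IsLZLike T Q) (j : ℕ)
    (hjP : j < P.length) (hjQ : j < Q.length)
    (h : phraseStart Q j ≤ phraseStart P j) :
    phraseStart Q (j+1) ≤ phraseStart P (j+1) := by
  obtain ⟨⟨hTP, hPne, _⟩, hgreedy⟩ := hP
  obtain ⟨hTQ, hQne, hQocc⟩ := hQ
  rw [phraseStart_succ P j hjP, phraseStart_succ Q j hjQ]
  have hPpos := getD_length_pos hPne hjP
  rcases hQocc j hjQ with h1 | ⟨p, hp, hocc⟩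
  · omega
  · by_contra hcon
    push_neg at hcon
    set sP := phraseStart P j with hsP
    set sQ := phraseStart Q j with hsQ
    set n := (Q.getD j []).length with hn
    have hend : sQ + n ≤ T.length := by
      have := phraseStart_le Q (j+1)
      rw [phraseStart_succ Q j hjQ, ← hTQ] at this
      omega
    refine hgreedy j hjP (n - (sP - sQ)) (by omega) (by omega) ?_
    have hQstart : (T.drop sQ).take n = Q.getD j [] :=
      take_drop_phraseStart T Q hTQ j hjQ
    have key := shift_match T p sQ n (sP - sQ) (hocc.trans hQstart.symm)
    refine ⟨p + (sP - sQ), by omega, ?_⟩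
    have : sQ + (sP - sQ) = sP := by omega
    rwa [this] at key

theorem greedy_lz_minimal {α : Type*} (T : List α) (P Q : List (List α))
    (hP : IsGreedyLZ T P) (hQ : IsLZLike T Q) : P.length ≤ Q.length := by
  by_contra hlt
  push_neg at hlt
  have hTP := hP.1.1
  have hTQ := hQ.1
  have main : ∀ j, phraseStart Q j ≤ phraseStart P j := by
    intro j
    induction j with
    | zero => simp [phraseStart]
    | succ j ih =>
      rcases lt_or_ge j P.length with hjP | hjP
      · rcases lt_or_ge j Q.length with hjQ | hjQ
        · exact exchange T P Q hP hQ j hjP hjQ ih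
        · rw [phraseStart_of_le Q j hjQ] at ih
          rw [phraseStart_of_le Q (j+1) (by omega), phraseStart_succ P j hjP]
          omega
      · rw [phraseStart_of_le P (j+1) (by omega), ← hTP, hTQ]
        exact phraseStart_le Q (j+1)
  have h1 := main Q.length
  rw [phraseStart_of_le Q Q.length le_rfl] at h1
  have h2 : phraseStart P Q.length < phraseStart P (Q.length + 1) := by
    rw [phraseStart_succ P Q.length hlt]
    have := getD_length_pos hP.1.2.1 hlt
    omega
  have h3 := phraseStart_le P (Q.length + 1)
  have h4 : Q.flatten.length = P.flatten.length := by rw [← hTQ, hTP]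
  omega
end
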